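/- Let A be a finite alphabet and let v be a word over A that is fully arched with k arches, i.e. v = s₁·s₂···s_k where each s_i is an A-arch. Then for all words u, t over A, r(v·u, t) = k + r(u, t) and ℓ(t, u·vᴿ) = k + ℓ(t, u), where vᴿ denotes the reversal of v and the equalities are in ℕ ∪ {∞} with k + ∞ = ∞. -/

import Mathlib

variable {A : Type*}

/-- Simon's congruence of order `k`: `u` and `v` have the same subwords of length ≤ k. -/
def SimonCong (k : ℕ) (u v : List A) : Prop :=
  ∀ s : List A, s.length ≤ k → (s.Sublist u ↔ s.Sublist v)

/-- Subword distance `δ(u,v) = sup {k | u ∼ₖ v} ∈ ℕ∞`. -/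
noncomputable def sdelta (u v : List A) : ℕ∞ :=
  sSup {d : ℕ∞ | ∃ k : ℕ, d = k ∧ SimonCong k u v}

/-- Right side distance `r(u,t) = δ(u, u·t)`. -/
noncomputable def rdist (u t : List A) : ℕ∞ := sdelta u (u ++ t)

/-- Left side distance `ℓ(t,u) = δ(t·u, u)`. -/
noncomputable def ldist (t u : List A) : ℕ∞ := sdelta (t ++ u) u

/-- Piecewise complexity `h(u)`: least `n` such that any `v` with `u ∼ₙ v` equals `u`. -/
noncomputable def pcHeight (u : List A) : ℕ :=
  sInf {n : ℕ | ∀ v : List A, SimonCong n u v → v = u}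

/-- `u` is `m`-reduced: no strict subword of `u` is `∼ₘ`-equivalent to `u`. -/
def Reduced (m : ℕ) (u : List A) : Prop :=
  ∀ u' : List A, u'.Sublist u → u' ≠ u → ¬ SimonCong m u u'

/-- Piecewise minimality index `ρ(u)`: least `m` such that `u` is `m`-reduced. -/
noncomputable def pcRho (u : List A) : ℕ := sInf {m : ℕ | Reduced m u}

/-- An `A`-arch: contains every letter of `A` but no strict prefix does. -/
def IsArch (A : Type*) [Fintype A] (s : List A) : Prop :=
  (∀ a : A, a ∈ s) ∧ ∀ t : List A, t <+: s → t ≠ s → ∃ a : A, a ∉ t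

/-- The infinite periodic word `u^ω`. -/
def omegaWord (u : List A) (hu : u ≠ []) (i : ℕ) : A :=
  u.get ⟨i % u.length, Nat.mod_lt i (List.length_pos_iff.mpr hu)⟩

/-- The arch-jumping function `α` on `u^ω`: `α(i)` is the least `j > i` such that
every letter of `A` occurs among positions `i, …, j-1` of `u^ω`. -/
noncomputable def archJump (u : List A) (hu : u ≠ []) (i : ℕ) : ℕ :=
  sInf {j : ℕ | i < j ∧ ∀ a : A, ∃ m : ℕ, i ≤ m ∧ m < j ∧ omegaWord u hu m = a}

/-- `p` is an arch-period of `u` starting at `i`. -/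
def IsArchPeriodAt (u : List A) (hu : u ≠ []) (i p : ℕ) : Prop :=
  0 < p ∧ ∃ k : ℕ, (archJump u hu)^[k + p] i ≡ (archJump u hu)^[k] i [MOD u.length]

/-- The arch-period of `u`: the least arch-period starting at 0. -/
noncomputable def archPeriod (u : List A) (hu : u ≠ []) : ℕ :=
  sInf {p : ℕ | IsArchPeriodAt u hu 0 p}

/-- `K_u`: the least `k` with `α^{k+p}(0) ≡ α^k(0) (mod L)`. -/
noncomputable def archTransientIndex (u : List A) (hu : u ≠ []) : ℕ :=
  sInf {k : ℕ |
    (archJump u hu)^[k + archPeriod u hu] 0 ≡ (archJump u hu)^[k] 0 [MOD u.length]}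

/-- The transient `T_u = α^{K_u}(0)`. -/
noncomputable def archTransient (u : List A) (hu : u ≠ []) : ℕ :=
  (archJump u hu)^[archTransientIndex u hu] 0

/-- The span `Δ_u = α^{K_u+p_u}(0) − α^{K_u}(0)`. -/
noncomputable def archSpan (u : List A) (hu : u ≠ []) : ℕ :=
  (archJump u hu)^[archTransientIndex u hu + archPeriod u hu] 0 - archTransient u hu

/-- `u^n`: the `n`-fold concatenation of `u`. -/
def listPow (u : List A) (n : ℕ) : List A := (List.replicate n u).flatten

section Aux
variable {A : Type*}

lemma simonCong_mono' {k j : ℕ} (h : j ≤ k) {u v : List A} (hc : SimonCong k u v) :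
    SimonCong j u v := fun s hs => hc s (hs.trans h)

lemma simonCong_zero' (u v : List A) : SimonCong 0 u v := by
  intro s hs
  have : s = [] := List.length_eq_zero_iff.mp (Nat.le_zero.mp hs)
  subst this; simp

lemma simonCong_symm' {k : ℕ} {u v : List A} (h : SimonCong k u v) : SimonCong k v u :=
  fun s hs => (h s hs).symm

lemma sdelta_comm' (u v : List A) : sdelta u v = sdelta v u := by
  unfold sdelta
  congr 1
  ext d
  exact ⟨fun ⟨m, h1, h2⟩ => ⟨m, h1, simonCong_symm' h2⟩,
         fun ⟨m, h1, h2⟩ => ⟨m, h1, simonCong_symm' h2⟩⟩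

lemma simonCong_reverse' {k : ℕ} {u v : List A} :
    SimonCong k u v ↔ SimonCong k u.reverse v.reverse := by
  constructor
  · intro h s hs
    have := h s.reverse (by simpa using hs)
    constructor
    · intro h1
      rw [← List.reverse_sublist] at h1 ⊢
      simpa using (this.mp (by simpa using h1))
    · intro h1
      have h2 : s.reverse.Sublist v := by
        rw [← List.reverse_sublist]; simpa using h1
      have := this.mpr h2
      rw [← List.reverse_sublist]; simpa using this
  · intro h s hs
    have := h s.reverse (by simpa using hs)
    constructor
    · intro h1
      have h2 : s.reverse.Sublist u.reverse := by
        rw [← List.reverse_sublist] at h1; simpa using h1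
      have h3 := this.mp h2
      rw [← List.reverse_sublist] at h3; simpa using h3
    · intro h1
      have h2 : s.reverse.Sublist v.reverse := by
        rw [← List.reverse_sublist] at h1; simpa using h1
      have h3 := this.mpr h2
      rw [← List.reverse_sublist] at h3; simpa using h3

lemma sdelta_reverse' (u v : List A) : sdelta u v = sdelta u.reverse v.reverse := by
  unfold sdelta
  congr 1
  ext d
  constructor
  · rintro ⟨m, h1, h2⟩; exact ⟨m, h1, simonCong_reverse'.mp h2⟩
  · rintro ⟨m, h1, h2⟩; exact ⟨m, h1, simonCong_reverse'.mpr h2⟩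

lemma sdelta_self' (u : List A) : sdelta u u = ⊤ := by
  unfold sdelta
  rw [sSup_eq_top]
  intro b hb
  lift b to ℕ using hb.ne
  exact ⟨((b+1 : ℕ) : ℕ∞), ⟨b+1, rfl, fun s _ => Iff.rfl⟩, by exact_mod_cast Nat.lt_succ_self b⟩

lemma embed_arches' (ss : List (List A)) (hss : ∀ s ∈ ss, ∀ a : A, a ∈ s)
    (y : List A) (hy : y.length ≤ ss.length) : y.Sublist ss.flatten := by
  induction ss generalizing y with
  | nil =>
    simp only [List.length_nil, Nat.le_zero] at hy
    simp [List.length_eq_zero_iff.mp hy]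
  | cons s ss ih =>
    cases y with
    | nil => simp
    | cons a y =>
      simp only [List.length_cons, Nat.add_le_add_iff_right] at hy
      have h1 : [a].Sublist s := List.singleton_sublist.mpr (hss s (by simp) a)
      have h2 : y.Sublist ss.flatten := ih (fun s hs => hss s (by simp [hs])) y hy
      simpa using h1.append h2

lemma cons_sublist_snoc' {a : A} : ∀ {p : List A} {m : List A},
    a ∉ p → (a :: m).Sublist (p ++ [a]) → m = [] := by
  intro p
  induction p with
  | nil =>
    intro m _ h
    have := h.length_le
    simp at this
    exact this
  | cons b p ih =>
    intro m ha h
    rw [List.cons_append] at h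
    cases h with
    | cons _ h' => exact ih (fun hm => ha (List.mem_cons_of_mem b hm)) h'
    | cons_cons _ h' => exact absurd List.mem_cons_self ha

lemma block_exists' [Fintype A] (ss : List (List A)) (hne : ∀ s ∈ ss, s ≠ [])
    (harch : ∀ s ∈ ss, IsArch A s) :
    ∃ c : List A, c.length = ss.length ∧ c.Sublist ss.flatten ∧
      ∀ w x : List A, (c ++ x).Sublist (ss.flatten ++ w) → x.Sublist w := by
  induction ss with
  | nil => exact ⟨[], rfl, by simp, fun w x h => by simpa using h⟩
  | cons s ss ih =>
    obtain ⟨c, hlen, hsub, hblock⟩ :=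
      ih (fun s hs => hne s (by simp [hs])) (fun s hs => harch s (by simp [hs]))
    have hsne : s ≠ [] := hne s (by simp)
    set a := s.getLast hsne with ha
    have hsplit : s.dropLast ++ [a] = s := List.dropLast_append_getLast hsne
    have hnotin : a ∉ s.dropLast := by
      have hdne : s.dropLast ≠ s := by
        intro h
        have := congrArg List.length h
        rw [List.length_dropLast] at this
        have : 0 < s.length := List.length_pos_iff.mpr hsne
        omega
      obtain ⟨b, hb⟩ := (harch s (by simp)).2 s.dropLast ⟨[a], hsplit⟩ hdne
      have hbs : b ∈ s := (harch s (by simp)).1 b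
      rw [← hsplit] at hbs
      rcases List.mem_append.mp hbs with h | h
      · exact absurd h hb
      · simp only [List.mem_singleton] at h; subst h; exact hb
    refine ⟨a :: c, by simp [hlen], ?_, ?_⟩
    · have h1 : [a].Sublist s := List.singleton_sublist.mpr (List.getLast_mem hsne)
      rw [List.flatten_cons]
      simpa using h1.append hsub
    · intro w x h
      rw [List.flatten_cons, List.append_assoc, List.cons_append] at h
      obtain ⟨l₁, l₂, heq, h₁, h₂⟩ := List.sublist_append_iff.mp h
      cases l₁ with
      | nil =>
        simp only [List.nil_append] at heq
        subst heq
        have : (c ++ x).Sublist (ss.flatten ++ w) :=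
          (List.sublist_cons_self a (c ++ x)).trans h₂
        exact hblock w x this
      | cons a' l₁' =>
        rw [List.cons_append] at heq
        injection heq with h3 h4
        subst h3
        have hl : l₁' = [] := by
          apply cons_sublist_snoc' hnotin
          rw [hsplit]; exact h₁
        subst hl
        simp only [List.nil_append] at h4
        subst h4
        exact hblock w x h₂

lemma key_iff' [Fintype A] (ss : List (List A)) (harch : ∀ s ∈ ss, IsArch A s)
    (hne : ∀ s ∈ ss, s ≠ []) (u t : List A) (m : ℕ) :
    SimonCong (ss.length + m) (ss.flatten ++ u) (ss.flatten ++ (u ++ t)) ↔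
      SimonCong m u (u ++ t) := by
  have hletters : ∀ s ∈ ss, ∀ a : A, a ∈ s := fun s hs a => (harch s hs).1 a
  constructor
  · -- direction B
    intro h x hx
    obtain ⟨c, hclen, hcsub, hcblock⟩ := block_exists' ss hne harch
    constructor
    · intro h1; exact h1.trans (List.sublist_append_left u t)
    · intro h1
      have h2 : (c ++ x).Sublist (ss.flatten ++ (u ++ t)) := hcsub.append h1
      have h3 : (c ++ x).Sublist (ss.flatten ++ u) := by
        refine (h (c ++ x) ?_).mpr h2
        simp [hclen]; omega
      exact hcblock u x h3
  · -- direction A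
    intro h x hx
    constructor
    · intro hsub
      exact hsub.trans (List.Sublist.append (List.Sublist.refl _) (List.sublist_append_left u t))
    · intro hsub
      obtain ⟨x₁, x₂, rfl, h₁, h₂⟩ := List.sublist_append_iff.mp hsub
      by_cases hc : x₂.length ≤ m
      · exact h₁.append ((h x₂ hc).mpr h₂)
      · rw [List.length_append] at hx
        push_neg at hc
        set k := ss.length with hk
        have hx1 : x₁.length < k := by
          have := h₁.length_le
          omega
        have hdrop : (x₂.drop (k - x₁.length)).length ≤ m := by
          rw [List.length_drop]; omega
        have h3 : (x₂.drop (k - x₁.length)).Sublist u :=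
          (h _ hdrop).mpr ((List.drop_sublist _ _).trans h₂)
        have h4 : (x₁ ++ x₂.take (k - x₁.length)).Sublist ss.flatten := by
          apply embed_arches' ss hletters
          rw [List.length_append, List.length_take]
          omega
        have h5 := h4.append h3
        rwa [List.append_assoc, List.take_append_drop] at h5

lemma sSup_shift' (P Q : ℕ → Prop) (k : ℕ) (hQ0 : Q 0)
    (hPd : ∀ {j j'}, j ≤ j' → P j' → P j)
    (hQd : ∀ {j j'}, j ≤ j' → Q j' → Q j)
    (hiff : ∀ m, P (k + m) ↔ Q m) :
    sSup {d : ℕ∞ | ∃ m : ℕ, d = m ∧ P m} =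
      (k : ℕ∞) + sSup {d : ℕ∞ | ∃ m : ℕ, d = m ∧ Q m} := by
  classical
  by_cases hall : ∀ m, Q m
  · have hP : ∀ m, P m := fun m => hPd (Nat.le_add_left m k) ((hiff m).mpr (hall m))
    have h1 : sSup {d : ℕ∞ | ∃ m : ℕ, d = (m : ℕ∞) ∧ P m} = ⊤ := by
      rw [sSup_eq_top]
      intro b hb
      lift b to ℕ using hb.ne
      exact ⟨((b+1 : ℕ) : ℕ∞), ⟨b+1, rfl, hP _⟩, by exact_mod_cast Nat.lt_succ_self b⟩
    have h2 : sSup {d : ℕ∞ | ∃ m : ℕ, d = (m : ℕ∞) ∧ Q m} = ⊤ := by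
      rw [sSup_eq_top]
      intro b hb
      lift b to ℕ using hb.ne
      exact ⟨((b+1 : ℕ) : ℕ∞), ⟨b+1, rfl, hall _⟩, by exact_mod_cast Nat.lt_succ_self b⟩
    rw [h1, h2]
    simp
  · push_neg at hall
    have hex : ∃ m, ¬ Q m := hall
    set m₀ := Nat.find hex with hm₀def
    have hm₀ : ¬ Q m₀ := Nat.find_spec hex
    have hm₀pos : 0 < m₀ := Nat.pos_of_ne_zero (fun h => hm₀ (h ▸ hQ0))
    have hQiff : ∀ n, Q n ↔ n < m₀ := by
      intro n
      constructor
      · intro hq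
        by_contra hle
        push_neg at hle
        exact hm₀ (hQd hle hq)
      · intro hn
        exact not_not.mp (Nat.find_min hex hn)
    have hPiff : ∀ j, P j ↔ j < k + m₀ := by
      intro j
      constructor
      · intro hp
        by_contra hle
        push_neg at hle
        exact hm₀ ((hiff m₀).mp (hPd hle hp))
      · intro hj
        rcases le_or_gt j k with h | h
        · exact hPd h (by simpa using (hiff 0).mpr hQ0)
        · have hj2 : j = k + (j - k) := by omega
          rw [hj2]
          exact (hiff _).mpr ((hQiff _).mpr (by omega))
    have sup_of_lt : ∀ (R : ℕ → Prop) (N : ℕ), (∀ n, R n ↔ n < N + 1) →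
        sSup {d : ℕ∞ | ∃ m : ℕ, d = (m : ℕ∞) ∧ R m} = (N : ℕ∞) := by
      intro R N hR
      apply le_antisymm
      · apply sSup_le
        rintro d ⟨m, rfl, hm⟩
        exact_mod_cast Nat.lt_succ_iff.mp ((hR m).mp hm)
      · exact le_sSup ⟨N, rfl, (hR N).mpr (Nat.lt_succ_self N)⟩
    have e1 : sSup {d : ℕ∞ | ∃ m : ℕ, d = (m : ℕ∞) ∧ P m} = ((k + m₀ - 1 : ℕ) : ℕ∞) := by
      apply sup_of_lt
      intro n
      rw [hPiff]
      omega
    have e2 : sSup {d : ℕ∞ | ∃ m : ℕ, d = (m : ℕ∞) ∧ Q m} = ((m₀ - 1 : ℕ) : ℕ∞) := by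
      apply sup_of_lt
      intro n
      rw [hQiff]
      omega
    rw [e1, e2]
    rw [show k + m₀ - 1 = k + (m₀ - 1) by omega]
    push_cast
    ring

end Aux

/-- prepending a fully arched word with `k` arches shifts `r` by `k`,
and symmetrically for `ℓ` with the reversal. -/
theorem stmt15 {A : Type*} [Fintype A] (v : List A) (k : ℕ) (ss : List (List A))
    (hlen : ss.length = k) (harch : ∀ s ∈ ss, IsArch A s) (hv : v = ss.flatten)
    (u t : List A) :
    rdist (v ++ u) t = (k : ℕ∞) + rdist u t ∧
    ldist t (u ++ v.reverse) = (k : ℕ∞) + ldist t u := by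
  subst hv
  subst hlen
  rcases isEmpty_or_nonempty A with hA | hA
  · have hnil : ∀ l : List A, l = [] := by
      intro l
      cases l with
      | nil => rfl
      | cons a _ => exact hA.elim a
    have h1 : ∀ x y : List A, sdelta x y = ⊤ := by
      intro x y
      rw [hnil x, hnil y, sdelta_self']
    constructor
    · unfold rdist
      rw [h1, h1]
      simp
    · unfold ldist
      rw [h1, h1]
      simp
  · have hne : ∀ s ∈ ss, s ≠ [] := by
      intro s hs h
      have := (harch s hs).1 (Classical.arbitrary A)
      rw [h] at this
      simp at this
    have part1 : ∀ u t : List A,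
        rdist (ss.flatten ++ u) t = (ss.length : ℕ∞) + rdist u t := by
      intro u t
      unfold rdist sdelta
      rw [List.append_assoc]
      exact sSup_shift' _ _ ss.length (simonCong_zero' _ _)
        (fun h => simonCong_mono' h) (fun h => simonCong_mono' h)
        (fun m => key_iff' ss harch hne u t m)
    refine ⟨part1 u t, ?_⟩
    unfold ldist
    calc sdelta (t ++ (u ++ ss.flatten.reverse)) (u ++ ss.flatten.reverse)
        = sdelta ((t ++ (u ++ ss.flatten.reverse)).reverse)
            ((u ++ ss.flatten.reverse).reverse) := sdelta_reverse' _ _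
      _ = sdelta ((ss.flatten ++ u.reverse) ++ t.reverse)
            (ss.flatten ++ u.reverse) := by
            simp [List.reverse_append, List.append_assoc]
      _ = sdelta (ss.flatten ++ u.reverse)
            ((ss.flatten ++ u.reverse) ++ t.reverse) := sdelta_comm' _ _
      _ = rdist (ss.flatten ++ u.reverse) t.reverse := rfl
      _ = (ss.length : ℕ∞) + rdist u.reverse t.reverse := part1 _ _
      _ = (ss.length : ℕ∞) + sdelta (t ++ u) u := by
            congr 1
            unfold rdist
            calc sdelta u.reverse (u.reverse ++ t.reverse)
                = sdelta u.reverse ((t ++ u).reverse) := by rw [List.reverse_append]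
              _ = sdelta u (t ++ u) := (sdelta_reverse' _ _).symm
              _ = sdelta (t ++ u) u := sdelta_comm' _ _
      _ = (ss.length : ℕ∞) + ldist t u := rfl
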